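/- Let A be a symmetric positive definite 2d×2d real matrix satisfying AᵀJA = J with J = [[0,I],[I,0]]. Then there exists an O(d,d) matrix 𝒪 (i.e. 𝒪ᵀJ𝒪 = J) such that A = 𝒪ᵀ𝒪. -/

import Mathlib

open Matrix

/-- A symmetric positive definite `2d × 2d` real matrix `A` with `Aᵀ * J * A = J`
(`J = [[0,I],[I,0]]`) lies in the orbit of the identity: there is an `O(d,d)` matrix `𝒪`
(`𝒪ᵀ * J * 𝒪 = J`) with `A = 𝒪ᵀ * 𝒪`. -/
theorem posdef_generalized_metric_orbit (d : ℕ) (hd : 1 ≤ d)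
    (J : Matrix (Fin d ⊕ Fin d) (Fin d ⊕ Fin d) ℝ)
    (hJ : J = Matrix.fromBlocks 0 1 1 0)
    (A : Matrix (Fin d ⊕ Fin d) (Fin d ⊕ Fin d) ℝ)
    (hAsym : Aᵀ = A) (hApd : A.PosDef)
    (hodd : Aᵀ * J * A = J) :
    ∃ O : Matrix (Fin d ⊕ Fin d) (Fin d ⊕ Fin d) ℝ, Oᵀ * J * O = J ∧ A = Oᵀ * O := by
  have hJJ : J * J = 1 := by
    subst hJ
    simp [Matrix.fromBlocks_multiply, ← Matrix.fromBlocks_one]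
  have hJsym : Jᵀ = J := by
    subst hJ
    simp [Matrix.fromBlocks_transpose]
  open scoped MatrixOrder in set S := CFC.sqrt A with hSdef
  have hSS : S * S = A := by open scoped MatrixOrder in exact CFC.sqrt_mul_sqrt_self A hApd.posSemidef.nonneg
  have hSpsd : S.PosSemidef := by open scoped MatrixOrder in exact (CFC.sqrt_nonneg A).posSemidef
  have hSH : Sᴴ = S := hSpsd.1
  have hST : Sᵀ = S := hSH
  -- S is invertible
  have hdetA : IsUnit A.det := isUnit_iff_isUnit_det _ |>.1 hApd.isUnit
  have hdetS : IsUnit S.det := by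
    have : S.det * S.det = A.det := by rw [← det_mul, hSS]
    rcases hdetA with ⟨u, hu⟩
    exact isUnit_of_mul_isUnit_left (this ▸ hu ▸ u.isUnit)
  have hSinv : S * S⁻¹ = 1 := mul_nonsing_inv S hdetS
  have hSinv' : S⁻¹ * S = 1 := nonsing_inv_mul S hdetS
  -- A⁻¹ = J * A * J
  have hAJA : A * J * A = J := by rw [hAsym] at hodd; exact hodd
  have hAinv : A⁻¹ = J * A * J := by
    apply inv_eq_right_inv
    calc A * (J * A * J) = (A * J * A) * J := by noncomm_ring
    _ = J * J := by rw [hAJA]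
    _ = 1 := hJJ
  -- J * S * J is posSemidef
  have hJSJ : (J * S * J).PosSemidef := by
    have := hSpsd.conjTranspose_mul_mul_same J
    have hJH : Jᴴ = J := hJsym
    rwa [hJH] at this
  -- S⁻¹ is posSemidef
  have hSinvPS : (S⁻¹).PosSemidef := by
    have := hSpsd.conjTranspose_mul_mul_same S⁻¹
    have h1 : (S⁻¹)ᴴ * S * S⁻¹ = S⁻¹ := by
      rw [conjTranspose_nonsing_inv, hSH, hSinv', one_mul]
    rwa [h1] at this
  -- squares agree
  have hsq : (S⁻¹) ^ 2 = (J * S * J) ^ 2 := by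
    have h2 : (J * S * J) ^ 2 = J * A * J := by
      rw [pow_two]
      calc J * S * J * (J * S * J) = J * S * (J * J) * S * J := by noncomm_ring
      _ = J * (S * S) * J := by rw [hJJ]; noncomm_ring
      _ = J * A * J := by rw [hSS]
    have h1 : (S⁻¹) ^ 2 = A⁻¹ := by
      rw [pow_two, ← Matrix.mul_inv_rev, hSS]
    rw [h1, h2, hAinv]
  have hkey : S⁻¹ = J * S * J := by open scoped MatrixOrder in exact (CFC.sq_eq_sq_iff _ _ hSinvPS.nonneg hJSJ.nonneg).1 hsq
  refine ⟨S, ?_, ?_⟩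
  · rw [hST]
    calc S * J * S = S * (J * S * J) * J := by rw [mul_assoc, mul_assoc, mul_assoc, hJJ, mul_one]
    _ = S * S⁻¹ * J := by rw [← hkey]
    _ = J := by rw [hSinv, one_mul]
  · rw [hST, hSS]
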